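/- If m is a fundamental tuple with n = ord(m) > |idx(m)| + 2, then p = 3 and m_{0,1} + m_{1,1} + m_{2,1} = n. -/

import Mathlib

/-- The index of rigidity of a tuple of `p` partitions of `n`. -/
def idx (p n : ℕ) (m : Fin p → List ℕ) : ℤ :=
  2 * (n : ℤ) ^ 2 - ∑ j : Fin p, ((n : ℤ) ^ 2 - ((m j).map (fun x => (x : ℤ) ^ 2)).sum)

/-- `m` is a tuple of `p` partitions of `n`: each `m j` is a monotone non-increasing
list of positive integers summing to `n` with at least two parts. -/
def IsTuple (p n : ℕ) (m : Fin p → List ℕ) : Prop :=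
  0 < n ∧ ∀ j, (m j).Pairwise (· ≥ ·) ∧ (∀ x ∈ m j, 0 < x) ∧ (m j).sum = n ∧ 2 ≤ (m j).length

/-- The tuple is indivisible: no integer `k ≥ 2` divides all the entries. -/
def Indivisible (p : ℕ) (m : Fin p → List ℕ) : Prop :=
  ∀ k : ℕ, (∀ j, ∀ x ∈ m j, k ∣ x) → k = 1

/-- The tuple is basic: it is a tuple of partitions, `2n ≤ Σⱼ (n − m_{j,1})`,
and it is indivisible. -/
def IsBasic (p n : ℕ) (m : Fin p → List ℕ) : Prop :=
  IsTuple p n m ∧ 2 * (n : ℤ) ≤ (∑ j : Fin p, ((n : ℤ) - ((m j).headI : ℤ)))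
    ∧ Indivisible p m

/-- The tuple is fundamental: it is basic, or it is a positive integer multiple `k·m'`
of a basic tuple `m'` with `idx m' ≠ 0`. -/
def IsFundamental (p n : ℕ) (m : Fin p → List ℕ) : Prop :=
  ∃ (k n' : ℕ) (m' : Fin p → List ℕ), 0 < k ∧ n = k * n' ∧
    (∀ j, m j = (m' j).map (fun x => k * x)) ∧ IsBasic p n' m' ∧
    (k = 1 ∨ idx p n' m' ≠ 0)

/-! ### Auxiliary definitions and lemmas -/

def SQ (l : List ℕ) : ℤ := (l.map (fun x : ℕ => (x : ℤ)^2)).sum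
def dd (n : ℕ) (l : List ℕ) : ℤ := (n : ℤ) - (l.headI : ℤ)
def ee (n : ℕ) (l : List ℕ) : ℤ := (n : ℤ) * (l.headI : ℤ) - SQ l

lemma idx_eq (p n : ℕ) (m : Fin p → List ℕ) :
    idx p n m = 2 * (n : ℤ) ^ 2 - ∑ j : Fin p, ((n : ℤ) ^ 2 - SQ (m j)) := by
  unfold idx SQ
  congr 1
  apply Finset.sum_congr rfl
  intro j _
  congr 2
  induction (m j) with
  | nil => rfl
  | cons a t ih => simp_all

lemma sum_mul_sub (c : ℤ) (T : List ℕ) :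
    (T.map fun x : ℕ => (x:ℤ) * (c - (x:ℤ))).sum = c * (T.map (Nat.cast : ℕ → ℤ)).sum - SQ T := by
  induction T with
  | nil => simp [SQ]
  | cons a t ih => simp only [List.map_cons, List.sum_cons, SQ] at *; rw [ih]; ring

lemma mapsum_mul (K : ℤ) (T : List ℕ) :
    (T.map fun x : ℕ => (x:ℤ) * K).sum = (T.map (Nat.cast : ℕ → ℤ)).sum * K := by
  induction T with
  | nil => simp
  | cons a t ih => simp only [List.map_cons, List.sum_cons]; rw [ih]; ring

lemma cast_sum (T : List ℕ) : ((T.sum : ℤ)) = (T.map (Nat.cast : ℕ → ℤ)).sum :=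
  Nat.cast_list_sum T

lemma sum_map_k (k : ℕ) (L : List ℕ) : (L.map fun x => k * x).sum = k * L.sum := by
  induction L with
  | nil => simp
  | cons a t ih => simp [List.sum_cons, ih, Nat.mul_add]

lemma headI_map_k (k : ℕ) (L : List ℕ) (hL : L ≠ []) :
    (L.map fun x => k * x).headI = k * L.headI := by
  rcases L with _ | ⟨a, t⟩
  · exact absurd rfl hL
  · rfl

lemma len2 (L : List ℕ) (h : L.length = 2) : ∃ a b, L = [a, b] := by
  rcases L with _ | ⟨a, _ | ⟨b, _ | _⟩⟩ <;> simp_all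

set_option maxHeartbeats 1000000 in
lemma part (n : ℕ) (l : List ℕ) (hs : l.Pairwise (· ≥ ·)) (hpos : ∀ x ∈ l, 0 < x)
    (hsum : l.sum = n) (hlen : 2 ≤ l.length) :
    1 ≤ (l.headI : ℤ) ∧ (l.headI : ℤ) + 1 ≤ (n:ℤ) ∧ 0 ≤ ee n l ∧
    dd n l * ((n:ℤ) - 2 * dd n l) ≤ ee n l ∧
    (2 * dd n l ≤ (n:ℤ) - 1 → (l.headI:ℤ) - 1 ≤ ee n l) ∧
    (2 * dd n l = (n:ℤ) → l = [l.headI, l.headI] ∨ (n:ℤ) - 2 ≤ ee n l) := by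
  rcases l with _ | ⟨c, T⟩
  · simp at hlen
  have hT : T ≠ [] := by
    intro h; subst h; simp at hlen
  have hhead : (c :: T).headI = c := rfl
  have hTc : ∀ x ∈ T, x ≤ c := fun x hx => (List.pairwise_cons.mp hs).1 x hx
  have hTpos : ∀ x ∈ T, 0 < x := fun x hx => hpos x (List.mem_cons_of_mem _ hx)
  have hcpos : 0 < c := hpos c (List.mem_cons_self)
  have hTsum : (T.sum : ℤ) = (n : ℤ) - (c : ℤ) := by
    have : c + T.sum = n := by simpa using hsum
    push_cast [← this]; ring
  have hTS : ∀ x ∈ T, x ≤ T.sum := fun x hx => List.single_le_sum (fun _ _ => Nat.zero_le _) x hx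
  have hSQc : SQ (c :: T) = (c:ℤ)^2 + SQ T := by simp [SQ]
  have hEeq : ee n (c :: T) = (T.map fun x : ℕ => (x:ℤ) * ((c:ℤ) - (x:ℤ))).sum := by
    rw [sum_mul_sub, ← cast_sum, hTsum]
    simp only [ee, hhead, hSQc]; ring
  have hone : 1 ≤ (c : ℤ) := by exact_mod_cast hcpos
  have hTsum1 : 1 ≤ T.sum := by
    rcases T with _ | ⟨t, T'⟩
    · exact absurd rfl hT
    · have := hTpos t (List.mem_cons_self)
      simp only [List.sum_cons]; omega
  have hcn : (c : ℤ) + 1 ≤ (n:ℤ) := by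
    have : (1:ℤ) ≤ (T.sum : ℤ) := by exact_mod_cast hTsum1
    linarith [hTsum]
  have htermnn : ∀ x ∈ T, (0:ℤ) ≤ (x:ℤ) * ((c:ℤ) - (x:ℤ)) := by
    intro x hx
    have h1 : (x:ℤ) ≤ (c:ℤ) := by exact_mod_cast hTc x hx
    have h2 : (0:ℤ) ≤ (x:ℤ) := Int.natCast_nonneg x
    nlinarith
  have hE0 : 0 ≤ ee n (c :: T) := by
    rw [hEeq]
    exact List.sum_nonneg (by intro x hx; obtain ⟨y, hy, rfl⟩ := List.mem_map.mp hx; exact htermnn y hy)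
  refine ⟨hone, hcn, hE0, ?_, ?_, ?_⟩
  · rw [hEeq]
    have step : (T.map fun x : ℕ => (x:ℤ) * ((c:ℤ) - ((n:ℤ) - (c:ℤ)))).sum ≤
        (T.map fun x : ℕ => (x:ℤ) * ((c:ℤ) - (x:ℤ))).sum := by
      apply List.sum_le_sum
      intro x hx
      have hxd : (x:ℤ) ≤ (n:ℤ) - (c:ℤ) := by
        rw [← hTsum]; exact_mod_cast hTS x hx
      have h2 : (0:ℤ) ≤ (x:ℤ) := Int.natCast_nonneg x
      nlinarith
    have heval : (T.map fun x : ℕ => (x:ℤ) * ((c:ℤ) - ((n:ℤ) - (c:ℤ)))).sum =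
        ((n:ℤ) - (c:ℤ)) * (2 * (c:ℤ) - (n:ℤ)) := by
      rw [mapsum_mul ((c:ℤ) - ((n:ℤ) - (c:ℤ))) T, ← cast_sum, hTsum]; ring
    calc dd n (c::T) * ((n:ℤ) - 2 * dd n (c::T))
        = ((n:ℤ) - (c:ℤ)) * (2 * (c:ℤ) - (n:ℤ)) := by simp only [dd, hhead]; ring
      _ = (T.map fun x : ℕ => (x:ℤ) * ((c:ℤ) - ((n:ℤ) - (c:ℤ)))).sum := heval.symm
      _ ≤ _ := step
  · intro hdle
    rcases T with _ | ⟨t, T'⟩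
    · exact absurd rfl hT
    rw [hEeq]
    simp only [List.map_cons, List.sum_cons]
    have htpos : (1:ℤ) ≤ (t:ℤ) := by exact_mod_cast hTpos t (List.mem_cons_self)
    have htd : (t:ℤ) ≤ (n:ℤ) - (c:ℤ) := by
      rw [← hTsum]; exact_mod_cast hTS t (List.mem_cons_self)
    have hdc : (n:ℤ) - (c:ℤ) ≤ (c:ℤ) - 1 := by
      simp only [dd, hhead] at hdle; linarith
    have hrest : 0 ≤ (T'.map fun x : ℕ => (x:ℤ) * ((c:ℤ) - (x:ℤ))).sum :=
      List.sum_nonneg (by intro x hx; obtain ⟨y, hy, rfl⟩ := List.mem_map.mp hx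
                          exact htermnn y (List.mem_cons_of_mem _ hy))
    have hkey : (c:ℤ) - 1 ≤ (t:ℤ) * ((c:ℤ) - (t:ℤ)) := by
      nlinarith [mul_nonneg (by linarith : (0:ℤ) ≤ (t:ℤ) - 1) (by linarith : (0:ℤ) ≤ (c:ℤ) - (t:ℤ) - 1)]
    linarith
  · intro hdeq
    simp only [dd, hhead] at hdeq
    have hTsc : (T.sum : ℤ) = (c : ℤ) := by rw [hTsum]; linarith
    have hTsc' : T.sum = c := by exact_mod_cast hTsc
    rcases T with _ | ⟨t1, T1⟩
    · exact absurd rfl hT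
    rcases T1 with _ | ⟨t2, T''⟩
    · left
      have : t1 = c := by simpa using hTsc'
      subst this; rfl
    · right
      rw [hEeq]
      simp only [List.map_cons, List.sum_cons]
      have h1 : 1 ≤ t1 := hTpos t1 (by simp)
      have h2 : 1 ≤ t2 := hTpos t2 (by simp)
      have h12 : t1 + t2 ≤ c := by
        have hx : t1 + (t2 + T''.sum) = c := by simpa using hTsc'
        omega
      have hrest : 0 ≤ (T''.map fun x : ℕ => (x:ℤ) * ((c:ℤ) - (x:ℤ))).sum :=
        List.sum_nonneg (by intro x hx; obtain ⟨y, hy, rfl⟩ := List.mem_map.mp hx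
                            exact htermnn y (by simp [hy]))
      have c1 : (1:ℤ) ≤ (t1:ℤ) := by exact_mod_cast h1
      have c2 : (1:ℤ) ≤ (t2:ℤ) := by exact_mod_cast h2
      have c12 : (t1:ℤ) + (t2:ℤ) ≤ (c:ℤ) := by exact_mod_cast h12
      have hn2c : (n:ℤ) = 2 * (c:ℤ) := by linarith
      have k1 : (c:ℤ) - 1 ≤ (t1:ℤ) * ((c:ℤ) - (t1:ℤ)) := by
        nlinarith [mul_nonneg (by linarith : (0:ℤ) ≤ (t1:ℤ) - 1) (by linarith : (0:ℤ) ≤ (c:ℤ) - (t1:ℤ) - 1)]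
      have k2 : (c:ℤ) - 1 ≤ (t2:ℤ) * ((c:ℤ) - (t2:ℤ)) := by
        nlinarith [mul_nonneg (by linarith : (0:ℤ) ≤ (t2:ℤ) - 1) (by linarith : (0:ℤ) ≤ (c:ℤ) - (t2:ℤ) - 1)]
      linarith

/-- If `m` is a fundamental tuple with `n = ord m > |idx m| + 2`, then `p = 3` and
the first (largest) parts of the three partitions sum to `n`. -/
theorem three_partitions_of_large_order (p n : ℕ) (m : Fin p → List ℕ)
    (hfund : IsFundamental p n m)
    (hbig : (|idx p n m| + 2 : ℤ) < n) :
    p = 3 ∧ (∑ j : Fin p, ((m j).headI : ℤ)) = n := by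
  obtain ⟨k, n', m', hk, hn, hm, ⟨⟨hn'pos, htup⟩, hbasic, hindiv⟩, hki⟩ := hfund
  have hne' : ∀ j, m' j ≠ [] := by
    intro j h
    have := (htup j).2.2.2
    rw [h] at this; simp at this
  -- the scaled tuple `m` is a tuple of partitions of n
  have hmt : ∀ j, (m j).Pairwise (· ≥ ·) ∧ (∀ x ∈ m j, 0 < x) ∧ (m j).sum = n ∧ 2 ≤ (m j).length := by
    intro j
    obtain ⟨h1, h2, h3, h4⟩ := htup j
    refine ⟨?_, ?_, ?_, ?_⟩
    · rw [hm j]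
      exact List.Pairwise.map _ (fun a b hab => Nat.mul_le_mul_left k hab) h1
    · intro x hx; rw [hm j] at hx
      obtain ⟨y, hy, rfl⟩ := List.mem_map.mp hx
      exact Nat.mul_pos hk (h2 y hy)
    · rw [hm j, sum_map_k, h3, hn]
    · rw [hm j, List.length_map]; exact h4
  have hpartj := fun j => part n (m j) (hmt j).1 (hmt j).2.1 (hmt j).2.2.1 (hmt j).2.2.2
  have hheadk : ∀ j, (m j).headI = k * (m' j).headI := fun j => by
    rw [hm j]; exact headI_map_k k _ (hne' j)
  have hd1 : ∀ j, 1 ≤ dd n (m j) := fun j => by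
    have := (hpartj j).2.1; unfold dd; linarith
  have hdN1 : ∀ j, dd n (m j) ≤ (n:ℤ) - 1 := fun j => by
    have := (hpartj j).1; unfold dd; linarith
  have he0 : ∀ j, 0 ≤ ee n (m j) := fun j => (hpartj j).2.2.1
  -- the basic inequality, scaled
  have hSd2 : 2 * (n:ℤ) ≤ ∑ j, dd n (m j) := by
    have h1 : ∀ j, dd n (m j) = (k:ℤ) * ((n':ℤ) - ((m' j).headI : ℤ)) := by
      intro j; unfold dd; rw [hheadk j, hn]; push_cast; ring
    calc 2*(n:ℤ) = (k:ℤ) * (2 * (n':ℤ)) := by rw [hn]; push_cast; ring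
      _ ≤ (k:ℤ) * ∑ j, ((n':ℤ) - ((m' j).headI:ℤ)) :=
          mul_le_mul_of_nonneg_left hbasic (by positivity)
      _ = ∑ j, dd n (m j) := by
          rw [Finset.mul_sum]; exact Finset.sum_congr rfl (fun j _ => (h1 j).symm)
  -- rewrite idx
  have hidx : idx p n m = 2*(n:ℤ)^2 - (∑ j, ee n (m j)) - (n:ℤ) * (∑ j, dd n (m j)) := by
    have h : ∑ j, ((n:ℤ)^2 - SQ (m j)) = (∑ j, ee n (m j)) + (n:ℤ) * ∑ j, dd n (m j) := by
      rw [Finset.mul_sum, ← Finset.sum_add_distrib]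
      exact Finset.sum_congr rfl fun j _ => by unfold ee dd; ring
    rw [idx_eq, h]; ring
  have hSe0 : 0 ≤ ∑ j, ee n (m j) := Finset.sum_nonneg fun j _ => he0 j
  have hN2 : (2:ℤ) < (n:ℤ) := by have := abs_nonneg (idx p n m); linarith
  have hN3 : (3:ℤ) ≤ (n:ℤ) := Int.lt_iff_add_one_le.mp hN2
  have hidxle : idx p n m ≤ 0 := by
    have h2 : (n:ℤ) * (2*(n:ℤ)) ≤ (n:ℤ) * ∑ j, dd n (m j) :=
      mul_le_mul_of_nonneg_left hSd2 (by linarith)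
    nlinarith [hidx, hSe0]
  have habs : (∑ j, ee n (m j)) + (n:ℤ) * (∑ j, dd n (m j)) - 2*(n:ℤ)^2 ≤ (n:ℤ) - 3 := by
    have h0 := abs_of_nonpos hidxle
    have h1 : -(idx p n m) < (n:ℤ) - 2 := by rw [← h0]; linarith
    have h2 : -(idx p n m) ≤ (n:ℤ) - 3 := by linarith [Int.lt_iff_add_one_le.mp h1]
    linarith [hidx]
  have hSdle : (∑ j, dd n (m j)) ≤ 2*(n:ℤ) := by
    by_contra hc
    push_neg at hc
    have h1 : 2*(n:ℤ) + 1 ≤ ∑ j, dd n (m j) := Int.lt_iff_add_one_le.mp hc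
    have h2 : (n:ℤ) * (2*(n:ℤ)+1) ≤ (n:ℤ) * ∑ j, dd n (m j) :=
      mul_le_mul_of_nonneg_left h1 (by linarith)
    have h3 : (n:ℤ)*(2*(n:ℤ)+1) = 2*(n:ℤ)^2 + (n:ℤ) := by ring
    linarith
  have hSdeq : (∑ j, dd n (m j)) = 2*(n:ℤ) := le_antisymm hSdle hSd2
  have hSele : (∑ j, ee n (m j)) ≤ (n:ℤ) - 3 := by
    rw [hSdeq] at habs; nlinarith [habs]
  -- p ≥ 3
  have hp3 : 3 ≤ p := by
    by_contra hc
    push_neg at hc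
    have hb : (∑ j, dd n (m j)) ≤ ∑ _j : Fin p, ((n:ℤ) - 1) :=
      Finset.sum_le_sum fun j _ => hdN1 j
    rw [Finset.sum_const, Finset.card_univ, Fintype.card_fin, nsmul_eq_mul] at hb
    have hple : ((p:ℕ):ℤ) ≤ 2 := by exact_mod_cast Nat.lt_succ_iff.mp hc
    have hprod : ((p:ℕ):ℤ) * ((n:ℤ)-1) ≤ 2 * ((n:ℤ)-1) :=
      mul_le_mul_of_nonneg_right hple (by linarith)
    linarith
  -- p ≤ 3 (the main case analysis)
  have hp4 : ¬ (4 ≤ p) := by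
    intro hp
    by_cases htwo : ∃ j1 j2 : Fin p, j1 ≠ j2 ∧ 2 * dd n (m j1) ≤ (n:ℤ) - 1 ∧
        2 * dd n (m j2) ≤ (n:ℤ) - 1
    · obtain ⟨j1, j2, hne12, hA, hB⟩ := htwo
      have e1 := (hpartj j1).2.2.2.2.1 hA
      have e2 := (hpartj j2).2.2.2.2.1 hB
      have hpair : ee n (m j1) + ee n (m j2) ≤ ∑ j, ee n (m j) := by
        have h1 : ∑ x ∈ ({j1, j2} : Finset (Fin p)), ee n (m x) ≤ ∑ j, ee n (m j) :=
          Finset.sum_le_sum_of_subset_of_nonneg (Finset.subset_univ _) (fun i _ _ => he0 i)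
        rw [Finset.sum_pair hne12] at h1
        exact h1
      have hq1 : dd n (m j1) = (n:ℤ) - ((m j1).headI:ℤ) := rfl
      have hq2 : dd n (m j2) = (n:ℤ) - ((m j2).headI:ℤ) := rfl
      linarith
    · by_cases hone1 : ∃ j0, 2 * dd n (m j0) ≤ (n:ℤ) - 1
      · obtain ⟨j0, hj0⟩ := hone1
        have hrest : ∀ j, j ≠ j0 → (n:ℤ) ≤ 2 * dd n (m j) := by
          intro j hj
          by_contra hcon
          push_neg at hcon
          have h1 : 2 * dd n (m j) ≤ (n:ℤ) - 1 := by
            linarith [Int.lt_iff_add_one_le.mp hcon]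
          exact htwo ⟨j, j0, hj, h1, hj0⟩
        by_cases hsm : 2 * dd n (m j0) ≤ (n:ℤ) - 2
        · have e4 := (hpartj j0).2.2.2.1
          have h1d := hd1 j0
          have hs : ee n (m j0) ≤ ∑ j, ee n (m j) :=
            Finset.single_le_sum (fun i _ => he0 i) (Finset.mem_univ j0)
          have hprod : 0 ≤ (dd n (m j0) - 1) * ((n:ℤ) - 2*dd n (m j0) - 2) :=
            mul_nonneg (by linarith) (by linarith)
          nlinarith [e4, hprod, hs, hSele, hN3]
        · push_neg at hsm
          have hexact : 2 * dd n (m j0) = (n:ℤ) - 1 :=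
            le_antisymm hj0 (by linarith [Int.lt_iff_add_one_le.mp hsm])
          have hplus : ∀ j, j ≠ j0 → (n:ℤ) + 1 ≤ 2 * dd n (m j) := by
            intro j hj
            have h1 := hrest j hj
            generalize dd n (m j) = a at h1 ⊢
            generalize dd n (m j0) = b at hexact
            omega
          have hsum2 : ∑ j, (2 * dd n (m j)) = 2 * ∑ j, dd n (m j) := by
            rw [Finset.mul_sum]
          have hsum1 : ∑ j ∈ Finset.univ.erase j0, (2 * dd n (m j)) =
              2 * (∑ j, dd n (m j)) - 2 * dd n (m j0) := by
            have h : ∑ j ∈ Finset.univ.erase j0, (2 * dd n (m j)) + 2 * dd n (m j0) =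
                ∑ j, (2 * dd n (m j)) :=
              Finset.sum_erase_add Finset.univ (fun j => 2 * dd n (m j)) (Finset.mem_univ j0)
            linarith [h, hsum2]
          have hlow : ∑ _j ∈ Finset.univ.erase j0, ((n:ℤ)+1) ≤
              ∑ j ∈ Finset.univ.erase j0, (2*dd n (m j)) :=
            Finset.sum_le_sum (fun j hj => hplus j (Finset.ne_of_mem_erase hj))
          rw [Finset.sum_const] at hlow
          have hcard : (Finset.univ.erase j0).card = p - 1 := by
            rw [Finset.card_erase_of_mem (Finset.mem_univ _), Finset.card_univ, Fintype.card_fin]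
          rw [hcard, nsmul_eq_mul] at hlow
          have hp1 : (3:ℤ) ≤ ((p-1:ℕ):ℤ) := by
            have h31 : 3 ≤ p - 1 := by omega
            exact_mod_cast h31
          have hprod : (3:ℤ)*((n:ℤ)+1) ≤ ((p-1:ℕ):ℤ) * ((n:ℤ)+1) :=
            mul_le_mul_of_nonneg_right hp1 (by linarith)
          linarith
      · push_neg at hone1
        have hall : ∀ j, (n:ℤ) ≤ 2 * dd n (m j) := by
          intro j
          have := hone1 j
          linarith [Int.lt_iff_add_one_le.mp this]
        have hsum2 : ∑ j, (2 * dd n (m j)) = 2 * ∑ j, dd n (m j) := by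
          rw [Finset.mul_sum]
        have hsum0 : ∑ j, (2 * dd n (m j) - (n:ℤ)) = 4*(n:ℤ) - (p:ℤ)*(n:ℤ) := by
          rw [Finset.sum_sub_distrib, hsum2, hSdeq, Finset.sum_const, Finset.card_univ,
            Fintype.card_fin, nsmul_eq_mul]
          ring
        have hnn : ∀ j ∈ Finset.univ, (0:ℤ) ≤ 2*dd n (m j) - (n:ℤ) :=
          fun j _ => by linarith [hall j]
        have hge : (0:ℤ) ≤ 4*(n:ℤ) - (p:ℤ)*(n:ℤ) := hsum0 ▸ Finset.sum_nonneg hnn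
        have hpeq4 : p = 4 := by
          by_contra hc
          have hp5 : 5 ≤ p := by omega
          have hp5' : (5:ℤ) ≤ ((p:ℕ):ℤ) := by exact_mod_cast hp5
          have : (5:ℤ)*(n:ℤ) ≤ ((p:ℕ):ℤ)*(n:ℤ) :=
            mul_le_mul_of_nonneg_right hp5' (by linarith)
          linarith
        have hzero : ∀ j ∈ Finset.univ, 2*dd n (m j) - (n:ℤ) = 0 := by
          apply (Finset.sum_eq_zero_iff_of_nonneg hnn).mp
          rw [hsum0, hpeq4]; push_cast; ring
        have hflat : ∀ j, m j = [(m j).headI, (m j).headI] := by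
          intro j
          have h6 := (hpartj j).2.2.2.2.2
            (by have := hzero j (Finset.mem_univ j); linarith)
          rcases h6 with h | h
          · exact h
          · exfalso
            have hs : ee n (m j) ≤ ∑ i, ee n (m i) :=
              Finset.single_le_sum (fun i _ => he0 i) (Finset.mem_univ j)
            linarith
        have hchalf : ∀ j, 2 * ((m j).headI : ℤ) = (n:ℤ) := by
          intro j
          have h := hzero j (Finset.mem_univ j)
          have hq : dd n (m j) = (n:ℤ) - ((m j).headI:ℤ) := rfl
          linarith
        have hp0 : 0 < p := by omega
        set j0 : Fin p := ⟨0, hp0⟩ with hj0def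
        have hheq : ∀ j, (m j).headI = (m j0).headI := by
          intro j
          have h1 := hchalf j
          have h2 := hchalf j0
          have h3 : ((m j).headI : ℤ) = ((m j0).headI : ℤ) := by linarith
          exact_mod_cast h3
        have hmem_eq : ∀ j, ∀ y ∈ m' j, k * y = (m j0).headI := by
          intro j y hy
          have hky : k * y ∈ m j := by rw [hm j]; exact List.mem_map_of_mem hy
          rw [hflat j] at hky
          have h2 : k*y = (m j).headI := by
            rcases List.mem_cons.mp hky with h | h
            · exact h
            · simpa using h
          rw [h2, hheq j]
        have hu : (m' j0).headI ∈ m' j0 := by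
          rcases hL : m' j0 with _ | ⟨a, t⟩
          · exact absurd hL (hne' j0)
          · simp
        have hkj0 : k * (m' j0).headI = (m j0).headI := hmem_eq j0 _ hu
        have hyu : ∀ j, ∀ y ∈ m' j, y = (m' j0).headI := by
          intro j y hy
          exact Nat.eq_of_mul_eq_mul_left hk ((hmem_eq j y hy).trans hkj0.symm)
        have hu1 : (m' j0).headI = 1 :=
          hindiv _ (fun j y hy => (hyu j y hy) ▸ dvd_refl _)
        have hm'11 : ∀ j, m' j = [1, 1] := by
          intro j
          have hlen2' : (m' j).length = 2 := by
            have h := congrArg List.length (hflat j)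
            rw [hm j, List.length_map] at h
            simpa using h
          obtain ⟨a, b, hab⟩ := len2 _ hlen2'
          have ha : a = 1 := by
            have := hyu j a (by rw [hab]; simp)
            rw [this, hu1]
          have hb : b = 1 := by
            have := hyu j b (by rw [hab]; simp)
            rw [this, hu1]
          rw [hab, ha, hb]
        have hn'2 : n' = 2 := by
          have h := (htup j0).2.2.1
          rw [hm'11 j0] at h
          simpa using h.symm
        have hidx0 : idx p n' m' = 0 := by
          rw [idx_eq]
          have hterm : ∀ j ∈ Finset.univ, (n':ℤ)^2 - SQ (m' j) = 2 := by
            intro j _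
            rw [hm'11 j, hn'2]
            simp [SQ]
          rw [Finset.sum_congr rfl hterm, Finset.sum_const, Finset.card_univ,
            Fintype.card_fin, hpeq4, hn'2]
          norm_num
        rcases hki with hk1 | hne0
        · have hn2 : n = 2 := by rw [hn, hk1, hn'2]
          rw [hn2] at hN3
          norm_num at hN3
        · exact hne0 hidx0
  have hpeq : p = 3 := by omega
  refine ⟨hpeq, ?_⟩
  have hcongr : ∀ j ∈ Finset.univ, ((m j).headI : ℤ) = (n:ℤ) - dd n (m j) :=
    fun j _ => by unfold dd; ring
  rw [Finset.sum_congr rfl hcongr, Finset.sum_sub_distrib, Finset.sum_const,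
    Finset.card_univ, Fintype.card_fin, nsmul_eq_mul, hSdeq]
  have hpc : ((p:ℕ):ℤ) = 3 := by exact_mod_cast hpeq
  rw [hpc]; ring
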